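/- There exists an absolute constant C > 0 such that for every β ∈ [1.9, 2] and every x ∈ (0, 1/2): W_{1,β}''(x) ≥ β/x² − C/x, where W_{1,β}(x) = K̃_{1,β}(e^x). -/

import Mathlib

open Real Set

/-- The kernel `K̃_{1,β}(s)` from (4.10). -/
noncomputable def Ktilde1 (β s : ℝ) : ℝ :=
  (β / 2) * (s ^ ((β + 1) / 2) + s ^ (-((β + 1) / 2))) * Real.log |(s + 1) / (s - 1)|
    - 2 * s * (s ^ ((β + 1) / 2) - s ^ (-((β + 1) / 2))) / (s ^ 2 - 1)
    + (2 - β) * (s ^ ((β - 1) / 2) + s ^ ((1 - β) / 2))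

/-- `W_{1,β}(x) = K̃_{1,β}(e^x)`. -/
noncomputable def W1 (β x : ℝ) : ℝ := Ktilde1 β (Real.exp x)

set_option maxHeartbeats 1000000

-- helper monotone lemma
lemma mono_helper {f f' : ℝ → ℝ} (hd : ∀ t, HasDerivAt f (f' t) t)
    (h0 : ∀ t, 0 ≤ t → 0 ≤ f' t) {x : ℝ} (hx : 0 ≤ x) : f 0 ≤ f x := by
  have hmono : MonotoneOn f (Ici 0) := by
    apply monotoneOn_of_deriv_nonneg (convex_Ici 0)
    · exact (Differentiable.continuous fun t => (hd t).differentiableAt).continuousOn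
    · intro t ht
      exact ((hd t).differentiableAt).differentiableWithinAt
    · intro t ht
      rw [(hd t).deriv]
      exact h0 t (le_of_lt (by simpa [interior_Ici] using ht))
  exact hmono self_mem_Ici hx hx

lemma sinh_le_mul_cosh {x : ℝ} (hx : 0 ≤ x) : Real.sinh x ≤ x * Real.cosh x := by
  have h := mono_helper (f := fun t => t * Real.cosh t - Real.sinh t)
    (f' := fun t => t * Real.sinh t)
    (fun t => by
      have h1 : HasDerivAt (fun t : ℝ => t * Real.cosh t - Real.sinh t)
          (1 * Real.cosh t + t * Real.sinh t - Real.cosh t) t :=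
        ((hasDerivAt_id t).mul (Real.hasDerivAt_cosh t)).sub (Real.hasDerivAt_sinh t)
      convert h1 using 1; ring)
    (fun t ht => by
      rcases lt_or_ge t 0 with h | h
      · exact absurd ht (not_le.mpr h)
      · exact mul_nonneg h (Real.sinh_nonneg_iff.mpr h)) hx
  simp at h
  linarith

lemma cosh_mul_sinh_le {a x : ℝ} (ha : 1 ≤ a) (hx : 0 ≤ x) :
    Real.sinh (x * a) * Real.cosh x ≤ a * Real.cosh (x * a) * Real.sinh x := by
  have h := mono_helper
    (f := fun t => a * Real.cosh (t * a) * Real.sinh t - Real.sinh (t * a) * Real.cosh t)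
    (f' := fun t => (a ^ 2 - 1) * Real.sinh (t * a) * Real.sinh t)
    (fun t => by
      have hca : HasDerivAt (fun t : ℝ => Real.cosh (t * a)) (Real.sinh (t * a) * (1 * a)) t :=
        ((hasDerivAt_id t).mul_const a).cosh
      have hsa : HasDerivAt (fun t : ℝ => Real.sinh (t * a)) (Real.cosh (t * a) * (1 * a)) t :=
        ((hasDerivAt_id t).mul_const a).sinh
      have h1 := (((hca.const_mul a).mul (Real.hasDerivAt_sinh t))).sub
        (hsa.mul (Real.hasDerivAt_cosh t))
      exact h1.congr_deriv (by ring))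
    (fun t ht => by
      have : 0 ≤ Real.sinh (t * a) := Real.sinh_nonneg_iff.mpr (by positivity)
      have : 0 ≤ Real.sinh t := Real.sinh_nonneg_iff.mpr ht
      have ha2 : 0 ≤ a ^ 2 - 1 := by nlinarith
      positivity) hx
  simp at h
  linarith

noncomputable def Ea (β x : ℝ) : ℝ :=
  β * Real.cosh (x * ((β + 1) / 2)) * (Real.log (Real.exp x + 1) - Real.log (Real.exp x - 1))
    - 2 * Real.sinh (x * ((β + 1) / 2)) / Real.sinh x
    + 2 * (2 - β) * Real.cosh (x * ((β - 1) / 2))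

lemma W1_eq_Ea (β : ℝ) {x : ℝ} (hx : 0 < x) : W1 β x = Ea β x := by
  have he1 : (1:ℝ) < Real.exp x := by
    rw [← Real.exp_zero]; exact Real.exp_lt_exp.mpr hx
  have he0 : (0:ℝ) < Real.exp x := Real.exp_pos x
  unfold W1 Ktilde1 Ea
  rw [Real.rpow_def_of_pos he0, Real.rpow_def_of_pos he0, Real.rpow_def_of_pos he0,
    Real.rpow_def_of_pos he0, Real.log_exp, Real.log_abs,
    Real.log_div (by linarith) (by linarith),
    Real.cosh_eq, Real.cosh_eq, Real.sinh_eq, Real.sinh_eq]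
  have e1 : x * -((β + 1) / 2) = -(x * ((β + 1) / 2)) := by ring
  have e2 : x * ((1 - β) / 2) = -(x * ((β - 1) / 2)) := by ring
  rw [e1, e2, Real.exp_neg, Real.exp_neg, Real.exp_neg x]
  have hs2 : Real.exp x ^ 2 - 1 ≠ 0 := by nlinarith
  have hsx : Real.exp x - (Real.exp x)⁻¹ ≠ 0 := by
    have : (Real.exp x)⁻¹ < 1 := by
      rw [inv_lt_one_iff₀]; right; exact he1
    intro h; nlinarith
  have hex : Real.exp x ≠ 0 := (Real.exp_pos x).ne'
  have hterm : 2 * Real.exp x * (Real.exp (x * ((β + 1) / 2)) - (Real.exp (x * ((β + 1) / 2)))⁻¹)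
        / (Real.exp x ^ 2 - 1)
      = 2 * ((Real.exp (x * ((β + 1) / 2)) - (Real.exp (x * ((β + 1) / 2)))⁻¹) / 2)
        / ((Real.exp x - (Real.exp x)⁻¹) / 2) := by
    rw [div_eq_div_iff hs2 (div_ne_zero hsx two_ne_zero)]
    field_simp
  rw [hterm]
  ring

noncomputable def g1 (β x : ℝ) : ℝ :=
  β * ((β + 1) / 2) * Real.sinh (x * ((β + 1) / 2)) *
      (Real.log (Real.exp x + 1) - Real.log (Real.exp x - 1))
    - β * Real.cosh (x * ((β + 1) / 2)) / Real.sinh x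
    - (2 * ((β + 1) / 2) * Real.cosh (x * ((β + 1) / 2)) * Real.sinh x
        - 2 * Real.sinh (x * ((β + 1) / 2)) * Real.cosh x) / Real.sinh x ^ 2
    + 2 * (2 - β) * ((β - 1) / 2) * Real.sinh (x * ((β - 1) / 2))

noncomputable def g2 (β x : ℝ) : ℝ :=
  β * ((β + 1) / 2) ^ 2 * Real.cosh (x * ((β + 1) / 2)) *
      (Real.log (Real.exp x + 1) - Real.log (Real.exp x - 1))
    - 2 * β * ((β + 1) / 2) * Real.sinh (x * ((β + 1) / 2)) / Real.sinh x
    + β * Real.cosh (x * ((β + 1) / 2)) * Real.cosh x / Real.sinh x ^ 2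
    - 2 * (((β + 1) / 2) ^ 2 - 1) * Real.sinh (x * ((β + 1) / 2)) / Real.sinh x
    + 4 * (((β + 1) / 2) * Real.cosh (x * ((β + 1) / 2)) * Real.sinh x
        - Real.sinh (x * ((β + 1) / 2)) * Real.cosh x) * Real.cosh x / Real.sinh x ^ 3
    + 2 * (2 - β) * ((β - 1) / 2) ^ 2 * Real.cosh (x * ((β - 1) / 2))

section derivs
variable {β x : ℝ}

lemma basic_facts (hx : 0 < x) :
    (1:ℝ) < Real.exp x ∧ Real.sinh x ≠ 0 ∧ Real.exp x + 1 ≠ 0 ∧ Real.exp x - 1 ≠ 0 := by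
  have he1 : (1:ℝ) < Real.exp x := by rw [← Real.exp_zero]; exact Real.exp_lt_exp.mpr hx
  exact ⟨he1, (Real.sinh_pos_iff.mpr hx).ne', by positivity, by linarith⟩

lemma hasDerivAt_Ea (hx : 0 < x) : HasDerivAt (Ea β) (g1 β x) x := by
  obtain ⟨he1, hs, hp1, hm1⟩ := basic_facts hx
  have hca : HasDerivAt (fun t : ℝ => Real.cosh (t * ((β + 1) / 2)))
      (Real.sinh (x * ((β + 1) / 2)) * (1 * ((β + 1) / 2))) x :=
    ((hasDerivAt_id x).mul_const _).cosh
  have hsa : HasDerivAt (fun t : ℝ => Real.sinh (t * ((β + 1) / 2)))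
      (Real.cosh (x * ((β + 1) / 2)) * (1 * ((β + 1) / 2))) x :=
    ((hasDerivAt_id x).mul_const _).sinh
  have hcb : HasDerivAt (fun t : ℝ => Real.cosh (t * ((β - 1) / 2)))
      (Real.sinh (x * ((β - 1) / 2)) * (1 * ((β - 1) / 2))) x :=
    ((hasDerivAt_id x).mul_const _).cosh
  have hex : Real.exp x ≠ 0 := (Real.exp_pos x).ne'
  have hsx : Real.exp x - (Real.exp x)⁻¹ ≠ 0 := by
    have h2 : (Real.exp x)⁻¹ < 1 := by rw [inv_lt_one_iff₀]; right; exact he1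
    intro h; nlinarith
  have hL : HasDerivAt (fun t : ℝ => Real.log (Real.exp t + 1) - Real.log (Real.exp t - 1))
      (-(1 / Real.sinh x)) x := by
    have h0 : HasDerivAt (fun t : ℝ => Real.log (Real.exp t + 1) - Real.log (Real.exp t - 1))
        (Real.exp x / (Real.exp x + 1) - Real.exp x / (Real.exp x - 1)) x :=
      (((Real.hasDerivAt_exp x).add_const 1).log hp1).sub
        (((Real.hasDerivAt_exp x).sub_const 1).log hm1)
    convert h0 using 1
    have he2 : Real.exp x ^ 2 - 1 ≠ 0 := by nlinarith
    have hsinh : Real.sinh x = (Real.exp x ^ 2 - 1) / (2 * Real.exp x) := by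
      rw [Real.sinh_eq, Real.exp_neg]; field_simp
    rw [hsinh]
    field_simp
    ring
  have htot := (((hca.const_mul β).mul hL).sub
      ((hsa.const_mul 2).div (Real.hasDerivAt_sinh x) hs)).add (hcb.const_mul (2 * (2 - β)))
  refine htot.congr_deriv ?_
  unfold g1
  field_simp
  ring

lemma hasDerivAt_g1 (hx : 0 < x) : HasDerivAt (g1 β) (g2 β x) x := by
  obtain ⟨he1, hs, hp1, hm1⟩ := basic_facts hx
  have hca : HasDerivAt (fun t : ℝ => Real.cosh (t * ((β + 1) / 2)))
      (Real.sinh (x * ((β + 1) / 2)) * (1 * ((β + 1) / 2))) x :=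
    ((hasDerivAt_id x).mul_const _).cosh
  have hsa : HasDerivAt (fun t : ℝ => Real.sinh (t * ((β + 1) / 2)))
      (Real.cosh (x * ((β + 1) / 2)) * (1 * ((β + 1) / 2))) x :=
    ((hasDerivAt_id x).mul_const _).sinh
  have hsb : HasDerivAt (fun t : ℝ => Real.sinh (t * ((β - 1) / 2)))
      (Real.cosh (x * ((β - 1) / 2)) * (1 * ((β - 1) / 2))) x :=
    ((hasDerivAt_id x).mul_const _).sinh
  have hex : Real.exp x ≠ 0 := (Real.exp_pos x).ne'
  have hsx : Real.exp x - (Real.exp x)⁻¹ ≠ 0 := by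
    have h2 : (Real.exp x)⁻¹ < 1 := by rw [inv_lt_one_iff₀]; right; exact he1
    intro h; nlinarith
  have hL : HasDerivAt (fun t : ℝ => Real.log (Real.exp t + 1) - Real.log (Real.exp t - 1))
      (-(1 / Real.sinh x)) x := by
    have h0 : HasDerivAt (fun t : ℝ => Real.log (Real.exp t + 1) - Real.log (Real.exp t - 1))
        (Real.exp x / (Real.exp x + 1) - Real.exp x / (Real.exp x - 1)) x :=
      (((Real.hasDerivAt_exp x).add_const 1).log hp1).sub
        (((Real.hasDerivAt_exp x).sub_const 1).log hm1)
    convert h0 using 1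
    have he2 : Real.exp x ^ 2 - 1 ≠ 0 := by nlinarith
    have hsinh : Real.sinh x = (Real.exp x ^ 2 - 1) / (2 * Real.exp x) := by
      rw [Real.sinh_eq, Real.exp_neg]; field_simp
    rw [hsinh]
    field_simp
    ring
  have hs2 : Real.sinh x ^ 2 ≠ 0 := pow_ne_zero _ hs
  have hnum : HasDerivAt (fun t : ℝ =>
      2 * ((β + 1) / 2) * Real.cosh (t * ((β + 1) / 2)) * Real.sinh t
        - 2 * Real.sinh (t * ((β + 1) / 2)) * Real.cosh t)
      ((Real.sinh (x * ((β + 1) / 2)) * (1 * ((β + 1) / 2))) * (2 * ((β + 1) / 2)) * Real.sinh x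
        + 2 * ((β + 1) / 2) * Real.cosh (x * ((β + 1) / 2)) * Real.cosh x
        - ((Real.cosh (x * ((β + 1) / 2)) * (1 * ((β + 1) / 2))) * 2 * Real.cosh x
          + 2 * Real.sinh (x * ((β + 1) / 2)) * Real.sinh x)) x := by
    have h1 := ((hca.const_mul (2 * ((β + 1) / 2))).mul (Real.hasDerivAt_sinh x)).sub
      ((hsa.const_mul 2).mul (Real.hasDerivAt_cosh x))
    exact h1.congr_deriv (by ring)
  have hden : HasDerivAt (fun t : ℝ => Real.sinh t ^ 2)
      (2 * Real.sinh x ^ (2 - 1) * Real.cosh x) x := (Real.hasDerivAt_sinh x).pow 2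
  have htot := ((((hsa.const_mul (β * ((β + 1) / 2))).mul hL).sub
      ((hca.const_mul β).div (Real.hasDerivAt_sinh x) hs)).sub
      (hnum.div hden hs2)).add (hsb.const_mul (2 * (2 - β) * ((β - 1) / 2)))
  refine htot.congr_deriv ?_
  unfold g2
  field_simp
  ring
end derivs

lemma deriv_W1_eq (β : ℝ) {y : ℝ} (hy : 0 < y) : deriv (W1 β) y = g1 β y := by
  have hEq : W1 β =ᶠ[nhds y] Ea β :=
    Filter.eventuallyEq_of_mem (Ioi_mem_nhds hy) fun t ht => W1_eq_Ea β ht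
  rw [hEq.deriv_eq, (hasDerivAt_Ea hy).deriv]

lemma deriv2_W1_eq (β : ℝ) {x : ℝ} (hx : 0 < x) : deriv (deriv (W1 β)) x = g2 β x := by
  have hEq : deriv (W1 β) =ᶠ[nhds x] g1 β :=
    Filter.eventuallyEq_of_mem (Ioi_mem_nhds hx) fun t ht => deriv_W1_eq β ht
  rw [hEq.deriv_eq, (hasDerivAt_g1 hx).deriv]

lemma g2_lower {β x : ℝ} (hβ1 : 1.9 ≤ β) (hβ2 : β ≤ 2) (hx0 : 0 < x) (hx2 : x < 1 / 2) :
    β / x ^ 2 - 26 / x ≤ g2 β x := by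
  have hs : 0 < Real.sinh x := Real.sinh_pos_iff.mpr hx0
  have hxs : x ≤ Real.sinh x := (Real.self_lt_sinh_iff.mpr hx0).le
  have hc : (0:ℝ) < Real.cosh x := Real.cosh_pos x
  have hca : (0:ℝ) < Real.cosh (x * ((β + 1) / 2)) := Real.cosh_pos _
  have hxa_nn : 0 ≤ x * ((β + 1) / 2) := by nlinarith
  have hSnn : 0 ≤ Real.sinh (x * ((β + 1) / 2)) := Real.sinh_nonneg_iff.mpr hxa_nn
  -- cosh (x * a) ≤ 2
  have hcosh34 : Real.cosh (3 / 4 : ℝ) ≤ 2 := by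
    rw [Real.cosh_eq]
    have h1 : Real.exp (3 / 4 : ℝ) ≤ Real.exp 1 := Real.exp_le_exp.mpr (by norm_num)
    have h2 : Real.exp (-(3 / 4) : ℝ) ≤ Real.exp 0 := Real.exp_le_exp.mpr (by norm_num)
    have h3 := Real.exp_one_lt_d9
    rw [Real.exp_zero] at h2
    linarith
  have hc2 : Real.cosh (x * ((β + 1) / 2)) ≤ 2 := by
    refine le_trans (Real.cosh_le_cosh.mpr ?_) hcosh34
    rw [abs_of_nonneg hxa_nn, abs_of_nonneg (by norm_num : (0:ℝ) ≤ 3 / 4)]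
    nlinarith
  -- sinh (x * a) ≤ 3 sinh x
  have hS3 : Real.sinh (x * ((β + 1) / 2)) ≤ 3 * Real.sinh x := by
    have h1 : Real.sinh (x * ((β + 1) / 2)) ≤ (x * ((β + 1) / 2)) * Real.cosh (x * ((β + 1) / 2)) :=
      sinh_le_mul_cosh hxa_nn
    nlinarith
  -- N ≥ 0
  have hN : Real.sinh (x * ((β + 1) / 2)) * Real.cosh x
      ≤ ((β + 1) / 2) * Real.cosh (x * ((β + 1) / 2)) * Real.sinh x :=
    cosh_mul_sinh_le (by linarith) hx0.le
  -- L ≥ 0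
  have he1 : (1:ℝ) < Real.exp x := by rw [← Real.exp_zero]; exact Real.exp_lt_exp.mpr hx0
  have hL : 0 ≤ Real.log (Real.exp x + 1) - Real.log (Real.exp x - 1) := by
    have := Real.log_le_log (by linarith : (0:ℝ) < Real.exp x - 1)
      (by linarith : Real.exp x - 1 ≤ Real.exp x + 1)
    linarith
  -- term bounds
  have h1 : 0 ≤ β * ((β + 1) / 2) ^ 2 * Real.cosh (x * ((β + 1) / 2)) *
      (Real.log (Real.exp x + 1) - Real.log (Real.exp x - 1)) := by
    apply mul_nonneg _ hL
    positivity
  have h2 : 2 * β * ((β + 1) / 2) * Real.sinh (x * ((β + 1) / 2)) / Real.sinh x ≤ 18 := by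
    rw [div_le_iff₀ hs]
    have hco : 2 * β * ((β + 1) / 2) ≤ 6 := by nlinarith
    have hconn : (0:ℝ) ≤ 2 * β * ((β + 1) / 2) := by nlinarith
    nlinarith [mul_le_mul hco hS3 hSnn (by norm_num : (0:ℝ) ≤ 6)]
  have h3 : β / x ^ 2 ≤ β * Real.cosh (x * ((β + 1) / 2)) * Real.cosh x / Real.sinh x ^ 2 := by
    rw [div_le_div_iff₀ (by positivity) (by positivity)]
    have hsc : Real.sinh x ≤ x * Real.cosh x := sinh_le_mul_cosh hx0.le
    have hcc : Real.cosh x ≤ Real.cosh (x * ((β + 1) / 2)) := by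
      apply Real.cosh_le_cosh.mpr
      rw [abs_of_nonneg hx0.le, abs_of_nonneg hxa_nn]
      nlinarith
    have k1 : Real.sinh x ^ 2 ≤ x ^ 2 * Real.cosh x ^ 2 := by
      nlinarith [mul_le_mul hsc hsc hs.le (mul_nonneg hx0.le hc.le)]
    have k2 : x ^ 2 * Real.cosh x ^ 2 ≤ x ^ 2 * (Real.cosh x * Real.cosh (x * ((β + 1) / 2))) := by
      nlinarith [mul_le_mul_of_nonneg_left hcc hc.le, sq_nonneg x]
    nlinarith [mul_le_mul_of_nonneg_left (k1.trans k2) (by linarith : (0:ℝ) ≤ β)]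
  have h4 : 2 * (((β + 1) / 2) ^ 2 - 1) * Real.sinh (x * ((β + 1) / 2)) / Real.sinh x ≤ 8 := by
    rw [div_le_iff₀ hs]
    have hco : 2 * (((β + 1) / 2) ^ 2 - 1) ≤ 8 / 3 := by nlinarith
    have hconn : (0:ℝ) ≤ 2 * (((β + 1) / 2) ^ 2 - 1) := by nlinarith
    nlinarith [mul_le_mul hco hS3 hSnn (by norm_num : (0:ℝ) ≤ 8 / 3)]
  have h5 : 0 ≤ 4 * (((β + 1) / 2) * Real.cosh (x * ((β + 1) / 2)) * Real.sinh x
      - Real.sinh (x * ((β + 1) / 2)) * Real.cosh x) * Real.cosh x / Real.sinh x ^ 3 := by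
    apply div_nonneg _ (by positivity)
    apply mul_nonneg (mul_nonneg (by norm_num) (by linarith)) hc.le
  have h6 : 0 ≤ 2 * (2 - β) * ((β - 1) / 2) ^ 2 * Real.cosh (x * ((β - 1) / 2)) := by
    exact mul_nonneg (mul_nonneg (mul_nonneg (by norm_num) (by linarith)) (sq_nonneg _))
      (Real.cosh_pos _).le
  have h26 : (26:ℝ) ≤ 26 / x := by
    rw [le_div_iff₀ hx0]; nlinarith
  unfold g2
  linarith

/-- Estimate (A.11) from the proof of Lemma 4.2: there is an absolute constant `C`
such that `W_{1,β}''(x) ≥ β/x² - C/x` for all `β ∈ [1.9, 2]` and `x ∈ (0, 1/2)`. -/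
theorem W1_second_deriv_lower_bound :
    ∃ C : ℝ, 0 < C ∧
      ∀ β ∈ Icc (1.9 : ℝ) 2, ∀ x ∈ Ioo (0 : ℝ) (1 / 2),
        β / x ^ 2 - C / x ≤ deriv (deriv (W1 β)) x := by
  refine ⟨26, by norm_num, fun β hβ x hx => ?_⟩
  rw [deriv2_W1_eq β hx.1]
  exact g2_lower hβ.1 hβ.2 hx.1 hx.2
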